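/- Let G be a group with no elements of order 8, let x ∈ G be a left 3-Engel element of order 2, and let g ∈ G be an element of order 4. Let u, v, t be three distinct elements of {x, x^g, x^{g²}, x^{g³}} such that u and v commute. Then the subgroup ⟨u, v, t⟩ is nilpotent of class at most 3. -/

import Mathlib

/-- The paper's commutator `[g,h] = g⁻¹h⁻¹gh`. -/
def paperComm {G : Type*} [Group G] (g h : G) : G := g⁻¹ * h⁻¹ * g * h

/-- `x` is a left 3-Engel element of `G`. -/
def IsLeftThreeEngel {G : Type*} [Group G] (x : G) : Prop :=
  ∀ g : G, paperComm (paperComm (paperComm g x) x) x = 1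

open scoped commutatorElement

section Word
variable {G : Type*} [Group G]

lemma inv_of_invol {y : G} (h : y*y = 1) : y⁻¹ = y :=
  inv_eq_of_mul_eq_one_right h

lemma cancel_left {y : G} (h : y*y = 1) : ∀ t : G, y*(y*t) = t := by
  intro t; rw [← mul_assoc, h, one_mul]

lemma invol_mul_comm {y z : G} (hy : y*y = 1) (hz : z*z = 1)
    (hyz : (y*z)*(y*z) = 1) : y*z = z*y := by
  have h1 : (y*z)⁻¹ = y*z := inv_of_invol hyz
  have h2 : (y*z)⁻¹ = z*y := by
    rw [mul_inv_rev, inv_of_invol hy, inv_of_invol hz]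
  rw [← h1, h2]

lemma central_sq {y z : G} (hy : y*y = 1) (hz : z*z = 1) (h4 : (y*z)^4 = 1) :
    ((y*z)^2)*((y*z)^2) = 1 ∧ ((y*z)^2)*y = y*((y*z)^2) ∧ ((y*z)^2)*z = z*((y*z)^2) := by
  have hsq : ((y*z)^2)*((y*z)^2) = 1 := by
    rw [← pow_add]; exact h4
  have hinv2 : ((y*z)^2)⁻¹ = (y*z)^2 := inv_of_invol hsq
  have hzy : (z*y)^2 = ((y*z)^2)⁻¹ := by
    rw [← inv_pow, mul_inv_rev, inv_of_invol hy, inv_of_invol hz]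
  have hyc : y*((y*z)^2)*y = (y*z)^2 := by
    have e1 : y*((y*z)^2)*y = (z*y)^2 := by
      simp only [pow_two, mul_assoc, cancel_left hy, cancel_left hz, hy, hz, mul_one]
    rw [e1, hzy, hinv2]
  have hzc : z*((y*z)^2)*z = (y*z)^2 := by
    have e1 : z*((y*z)^2)*z = (z*y)^2 := by
      simp only [pow_two, mul_assoc, cancel_left hy, cancel_left hz, hy, hz, mul_one]
    rw [e1, hzy, hinv2]
  refine ⟨hsq, ?_, ?_⟩
  · have := congrArg (fun w => y * w) hyc
    simpa [mul_assoc, cancel_left hy] using this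
  · have := congrArg (fun w => z * w) hzc
    simpa [mul_assoc, cancel_left hz] using this

lemma mcomm_invol {y z : G} (hy : y*y = 1) (hz : z*z = 1) : ⁅y,z⁆ = (y*z)^2 := by
  rw [commutatorElement_def, inv_of_invol hy, inv_of_invol hz]
  simp only [pow_two, mul_assoc]

lemma pcomm_invol {y z : G} (hy : y*y = 1) (hz : z*z = 1) : paperComm y z = (y*z)^2 := by
  rw [paperComm, inv_of_invol hy, inv_of_invol hz]
  simp only [pow_two, mul_assoc]

lemma pcomm_eq_one_of_comm {y z : G} (h : y*z = z*y) : paperComm y z = 1 := by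
  rw [paperComm, mul_assoc, mul_assoc, h]
  group

lemma hallWitt (p q r : G) :
    (q⁻¹ * paperComm (paperComm p q⁻¹) r * q) *
    (r⁻¹ * paperComm (paperComm q r⁻¹) p * r) *
    (p⁻¹ * paperComm (paperComm r p⁻¹) q * p) = 1 := by
  simp only [paperComm]
  group

end Word

section Quads
variable {G : Type*} [Group G]

lemma quads (a b c : G) (ha : a*a = 1) (hb : b*b = 1) (hc : c*c = 1)
    (hac : a*c = c*a)
    (hF : ∀ m : G, m*m = 1 → (m*a)^4 = 1 ∧ (m*b)^4 = 1 ∧ (m*c)^4 = 1)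
    (h8 : ∀ w : G, w^8 = 1 → w^4 = 1) :
    ∀ s1 ∈ ({a,b,c} : Set G), ∀ s2 ∈ ({a,b,c} : Set G), ∀ s3 ∈ ({a,b,c} : Set G),
      ∀ s4 ∈ ({a,b,c} : Set G), ⁅⁅⁅s1,s2⁆,s3⁆,s4⁆ = 1 := by
  have hab4 : (a*b)^4 = 1 := (hF a ha).2.1
  have hcb4 : (c*b)^4 = 1 := (hF c hc).2.1
  obtain ⟨hz1sq, hz1a, hz1b⟩ := central_sq ha hb hab4
  obtain ⟨hz2sq, hz2c, hz2b⟩ := central_sq hc hb hcb4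
  set z1 := (a*b)^2 with hz1def
  set z2 := (c*b)^2 with hz2def
  have hz1c4 : (z1*c)^4 = 1 := (hF z1 hz1sq).2.2
  obtain ⟨hWsq, hWz1, hWc⟩ := central_sq hz1sq hc hz1c4
  set W := (z1*c)^2 with hWdef
  have hWb4 : (W*b)^4 = 1 := (hF W hWsq).2.1
  obtain ⟨hOsq, hOW, hOb⟩ := central_sq hWsq hb hWb4
  set Om := (W*b)^2 with hOdef
  have hz2a4 : (z2*a)^4 = 1 := (hF z2 hz2sq).1
  obtain ⟨hW2sq, hW2z2, hW2a⟩ := central_sq hz2sq ha hz2a4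
  set W2 := (z2*a)^2 with hW2def
  -- Hall–Witt application with (b, z1, c)
  have hHW := hallWitt b z1 c
  have e1 : paperComm b z1⁻¹ = 1 := by
    rw [inv_of_invol hz1sq]
    exact pcomm_eq_one_of_comm hz1b.symm
  have p1 : paperComm (1:G) c = 1 := by simp [paperComm]
  have e2 : paperComm z1 c⁻¹ = W := by
    rw [inv_of_invol hc, pcomm_invol hz1sq hc]
  have e3 : paperComm W b = Om := by
    rw [pcomm_invol hWsq hb]
  have e4 : paperComm c b⁻¹ = z2 := by
    rw [inv_of_invol hb, pcomm_invol hc hb]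
  have e5 : paperComm z2 z1 = (z2*z1)^2 := pcomm_invol hz2sq hz1sq
  rw [e1, p1, e2, e3, e4, e5] at hHW
  rw [mul_one, inv_mul_cancel, one_mul] at hHW
  -- hHW : (c⁻¹ * Om * c) * (b⁻¹ * (z2*z1)^2 * b) = 1
  have hQ2 : b⁻¹ * (z2*z1)^2 * b = (c⁻¹ * Om * c)⁻¹ :=
    eq_inv_of_mul_eq_one_right (by simpa only [mul_assoc] using hHW)
  have hXX : (c⁻¹*Om*c)*(c⁻¹*Om*c) = 1 := by
    have e : (c⁻¹*Om*c)*(c⁻¹*Om*c) = c⁻¹*(Om*Om)*c := by group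
    rw [e, hOsq]; group
  have h2 : (z2*z1)^2 = b * (c⁻¹*Om*c)⁻¹ * b⁻¹ := by rw [← hQ2]; group
  have hQ4 : (z2*z1)^4 = 1 := by
    calc (z2*z1)^4 = ((z2*z1)^2)*((z2*z1)^2) := by rw [← pow_add]
    _ = b * ((c⁻¹*Om*c)*(c⁻¹*Om*c))⁻¹ * b⁻¹ := by rw [h2]; group
    _ = 1 := by rw [hXX, inv_one, mul_one, mul_inv_cancel]
  have hz1z2_4 : (z1*z2)^4 = 1 := by
    have e : z1*z2 = (z2*z1)⁻¹ := by
      rw [mul_inv_rev, inv_of_invol hz1sq, inv_of_invol hz2sq]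
    rw [e, inv_pow, hQ4, inv_one]
  -- (abc)^2 = z1*z2
  have hca : ∀ t:G, c*(a*t) = a*(c*t) := fun t => by rw [← mul_assoc, ← hac, mul_assoc]
  have k1 : z2*b = c*(b*c) := by
    rw [hz2def]
    simp only [pow_two, mul_assoc, hb, mul_one]
  have habc2 : (a*b*c)*(a*b*c) = z1*z2 := by
    have key : c*(b*c) = b*(c*(b*(c*b))) := by
      have := hz2b
      rw [hz2def] at this
      simpa only [pow_two, mul_assoc, hb, mul_one] using this
    rw [hz1def, hz2def]
    simp only [pow_two, mul_assoc]
    rw [hca, key]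
  have habc4 : (a*b*c)^4 = 1 := by
    apply h8
    have h2 : (a*b*c)^2 = z1*z2 := by rw [pow_two]; exact habc2
    calc (a*b*c)^8 = ((a*b*c)^2)^4 := by rw [← pow_mul]
    _ = (z1*z2)^4 := by rw [h2]
    _ = 1 := hz1z2_4
  have hz12sq : (z1*z2)*(z1*z2) = 1 := by
    have h2 : (a*b*c)^2 = z1*z2 := by rw [pow_two]; exact habc2
    calc (z1*z2)*(z1*z2) = ((a*b*c)^2)*((a*b*c)^2) := by rw [h2]
    _ = (a*b*c)^4 := by rw [← pow_add]
    _ = 1 := habc4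
  have hz12 : z1*z2 = z2*z1 := invol_mul_comm hz1sq hz2sq hz12sq
  -- push lemmas
  have hz1a' : ∀ t:G, z1*(a*t) = a*(z1*t) := fun t => by rw [← mul_assoc, hz1a, mul_assoc]
  have hz1b' : ∀ t:G, z1*(b*t) = b*(z1*t) := fun t => by rw [← mul_assoc, hz1b, mul_assoc]
  have hz2c' : ∀ t:G, z2*(c*t) = c*(z2*t) := fun t => by rw [← mul_assoc, hz2c, mul_assoc]
  have hz2b' : ∀ t:G, z2*(b*t) = b*(z2*t) := fun t => by rw [← mul_assoc, hz2b, mul_assoc]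
  have hac' : ∀ t:G, a*(c*t) = c*(a*t) := fun t => by rw [← mul_assoc, hac, mul_assoc]
  -- W commutes with a, b, c ; W2 commutes with a, b, c
  have hWa : W*a = a*W := by
    rw [hWdef]
    simp only [pow_two, mul_assoc]
    rw [← hac, hz1a' c, hca, hz1a']
  have hW2c : W2*c = c*W2 := by
    rw [hW2def]
    simp only [pow_two, mul_assoc]
    rw [hac, hz2c' a, hac', hz2c']
  have hWb : W*b = b*W := by
    have k1r : z2*(b*z1) = c*(b*(c*z1)) := by
      have := congrArg (fun t => t*z1) k1
      simpa only [mul_assoc] using this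
    have k2 : z1*(c*(b*c)) = c*(b*(c*z1)) := by
      rw [← k1, ← k1r, ← mul_assoc, hz12, mul_assoc, hz1b]
    have k3 : c*(z1*(c*b)) = b*(c*(z1*c)) := by
      have := congrArg (fun t => c*(t*c)) k2
      simpa only [mul_assoc, cancel_left hc, hc, mul_one] using this
    rw [hWdef]
    simp only [pow_two, mul_assoc]
    rw [k3, hz1b']
  have hW2b : W2*b = b*W2 := by
    have k1' : z1*b = a*(b*a) := by
      rw [hz1def]
      simp only [pow_two, mul_assoc, hb, mul_one]
    have k1r' : z1*(b*z2) = a*(b*(a*z2)) := by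
      have := congrArg (fun t => t*z2) k1'
      simpa only [mul_assoc] using this
    have k2' : z2*(a*(b*a)) = a*(b*(a*z2)) := by
      rw [← k1', ← k1r', ← mul_assoc, ← hz12, mul_assoc, hz2b]
    have k3' : a*(z2*(a*b)) = b*(a*(z2*a)) := by
      have := congrArg (fun t => a*(t*a)) k2'
      simpa only [mul_assoc, cancel_left ha, ha, mul_one] using this
    rw [hW2def]
    simp only [pow_two, mul_assoc]
    rw [k3', hz2b']
  -- level tables
  have lvl2 : ∀ s1 ∈ ({a,b,c}:Set G), ∀ s2 ∈ ({a,b,c}:Set G),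
      ⁅s1,s2⁆ = 1 ∨ ⁅s1,s2⁆ = z1 ∨ ⁅s1,s2⁆ = z2 := by
    have hba : (b*a)^2 = z1 := by
      rw [show b*a = (a*b)⁻¹ from by rw [mul_inv_rev, inv_of_invol ha, inv_of_invol hb],
        inv_pow, ← hz1def, inv_of_invol hz1sq]
    have hbc : (b*c)^2 = z2 := by
      rw [show b*c = (c*b)⁻¹ from by rw [mul_inv_rev, inv_of_invol hc, inv_of_invol hb],
        inv_pow, ← hz2def, inv_of_invol hz2sq]
    intro s1 hs1 s2 hs2
    simp only [Set.mem_insert_iff, Set.mem_singleton_iff] at hs1 hs2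
    rcases hs1 with rfl|rfl|rfl <;> rcases hs2 with rfl|rfl|rfl
    · exact Or.inl (commutatorElement_self _)
    · exact Or.inr (Or.inl ((mcomm_invol ha hb).trans hz1def.symm))
    · exact Or.inl (commutatorElement_eq_one_iff_mul_comm.mpr hac)
    · exact Or.inr (Or.inl ((mcomm_invol hb ha).trans hba))
    · exact Or.inl (commutatorElement_self _)
    · exact Or.inr (Or.inr ((mcomm_invol hb hc).trans hbc))
    · exact Or.inl (commutatorElement_eq_one_iff_mul_comm.mpr hac.symm)
    · exact Or.inr (Or.inr ((mcomm_invol hc hb).trans hz2def.symm))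
    · exact Or.inl (commutatorElement_self _)
  have lvl3 : ∀ P : G, (P = 1 ∨ P = z1 ∨ P = z2) → ∀ s ∈ ({a,b,c}:Set G),
      ⁅P,s⁆ = 1 ∨ ⁅P,s⁆ = W ∨ ⁅P,s⁆ = W2 := by
    intro P hP s hs
    simp only [Set.mem_insert_iff, Set.mem_singleton_iff] at hs
    rcases hP with rfl|rfl|rfl <;> rcases hs with rfl|rfl|rfl
    · exact Or.inl (commutatorElement_one_left _)
    · exact Or.inl (commutatorElement_one_left _)
    · exact Or.inl (commutatorElement_one_left _)
    · exact Or.inl (commutatorElement_eq_one_iff_mul_comm.mpr hz1a)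
    · exact Or.inl (commutatorElement_eq_one_iff_mul_comm.mpr hz1b)
    · exact Or.inr (Or.inl ((mcomm_invol hz1sq hc).trans hWdef.symm))
    · exact Or.inr (Or.inr ((mcomm_invol hz2sq ha).trans hW2def.symm))
    · exact Or.inl (commutatorElement_eq_one_iff_mul_comm.mpr hz2b)
    · exact Or.inl (commutatorElement_eq_one_iff_mul_comm.mpr hz2c)
  have lvl4 : ∀ P : G, (P = 1 ∨ P = W ∨ P = W2) → ∀ s ∈ ({a,b,c}:Set G), ⁅P,s⁆ = 1 := by
    intro P hP s hs
    simp only [Set.mem_insert_iff, Set.mem_singleton_iff] at hs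
    rcases hP with rfl|rfl|rfl <;> rcases hs with rfl|rfl|rfl
    · exact commutatorElement_one_left _
    · exact commutatorElement_one_left _
    · exact commutatorElement_one_left _
    · exact commutatorElement_eq_one_iff_mul_comm.mpr hWa
    · exact commutatorElement_eq_one_iff_mul_comm.mpr hWb
    · exact commutatorElement_eq_one_iff_mul_comm.mpr hWc
    · exact commutatorElement_eq_one_iff_mul_comm.mpr hW2a
    · exact commutatorElement_eq_one_iff_mul_comm.mpr hW2b
    · exact commutatorElement_eq_one_iff_mul_comm.mpr hW2c
  intro s1 hs1 s2 hs2 s3 hs3 s4 hs4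
  exact lvl4 _ (lvl3 _ (lvl2 _ hs1 _ hs2) _ hs3) _ hs4

end Quads

section Crit
variable {G : Type*} [Group G]

/-- If `⁅w, s⁆ ∈ N` for all generators `s`, and `N` is normal, then `⁅w, y⁆ ∈ N` for all `y`. -/
lemma comm_mem_of_gen {S : Set G} (hS : Subgroup.closure S = ⊤) (N : Subgroup G) [hN : N.Normal]
    (w : G) (hgen : ∀ s ∈ S, ⁅w, s⁆ ∈ N) : ∀ y : G, ⁅w, y⁆ ∈ N := by
  let D : Subgroup G :=
  { carrier := {y | ⁅w, y⁆ ∈ N}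
    one_mem' := by
      simp only [Set.mem_setOf_eq, commutatorElement_one_right]
      exact N.one_mem
    mul_mem' := by
      intro y z hy hz
      simp only [Set.mem_setOf_eq] at hy hz ⊢
      have hid : ⁅w, y*z⁆ = ⁅w, y⁆ * (y * ⁅w, z⁆ * y⁻¹) := by
        simp only [commutatorElement_def]; group
      rw [hid]
      exact N.mul_mem hy (hN.conj_mem _ hz y)
    inv_mem' := by
      intro y hy
      simp only [Set.mem_setOf_eq] at hy ⊢
      have hid : ⁅w, y⁻¹⁆ = y⁻¹ * ⁅w, y⁆⁻¹ * y := by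
        simp only [commutatorElement_def]; group
      rw [hid]
      have : ⁅w, y⁆⁻¹ ∈ N := N.inv_mem hy
      have := hN.conj_mem _ this y⁻¹
      simpa using this }
  intro y
  have : y ∈ D := by
    have : (⊤ : Subgroup G) ≤ D := by
      rw [← hS, Subgroup.closure_le]
      intro s hs
      exact hgen s hs
    exact this (Subgroup.mem_top y)
  exact this

lemma crit (p q r : G)
    (h : ∀ s1 ∈ ({p,q,r}:Set G), ∀ s2 ∈ ({p,q,r}:Set G), ∀ s3 ∈ ({p,q,r}:Set G),
        ∀ s4 ∈ ({p,q,r}:Set G), ⁅⁅⁅s1,s2⁆,s3⁆,s4⁆ = 1) :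
    Subgroup.lowerCentralSeries (⊤ : Subgroup ↥(Subgroup.closure ({p,q,r} : Set G))) 3 = ⊥ := by
  set S : Set G := {p,q,r} with hSdef
  set K := ↥(Subgroup.closure S)
  set S' : Set K := ((↑) : K → G) ⁻¹' S with hS'def
  have htop : Subgroup.closure S' = ⊤ := Subgroup.closure_closure_coe_preimage
  have hinj : Function.Injective (Subgroup.closure S).subtype :=
    Subgroup.subtype_injective _
  have hquad : ∀ s1 ∈ S', ∀ s2 ∈ S', ∀ s3 ∈ S', ∀ s4 ∈ S',
      ⁅⁅⁅s1,s2⁆,s3⁆,s4⁆ = (1:K) := by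
    intro s1 h1 s2 h2 s3 h3 s4 h4
    apply hinj
    rw [map_commutatorElement, map_commutatorElement, map_commutatorElement, map_one]
    exact h _ h1 _ h2 _ h3 _ h4
  have hucs : Subgroup.upperCentralSeries K 3 = ⊤ := by
    rw [eq_top_iff, ← htop, Subgroup.closure_le]
    intro s1 h1
    have hmem3 : ∀ s ∈ S', ⁅s1, s⁆ ∈ Subgroup.upperCentralSeries K 2 := by
      intro s2 h2
      have hmem2 : ∀ s ∈ S', ⁅⁅s1,s2⁆, s⁆ ∈ Subgroup.upperCentralSeries K 1 := by
        intro s3 h3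
        have hmem1 : ∀ y : K, ⁅⁅⁅s1,s2⁆,s3⁆, y⁆ ∈ (⊥ : Subgroup K) := by
          apply comm_mem_of_gen htop
          intro s4 h4
          rw [Subgroup.mem_bot]
          exact hquad _ h1 _ h2 _ h3 _ h4
        rw [Subgroup.upperCentralSeries_one]
        rw [Subgroup.mem_center_iff]
        intro k
        have := hmem1 k
        rw [Subgroup.mem_bot] at this
        exact (commutatorElement_eq_one_iff_mul_comm.mp this).symm
      have := comm_mem_of_gen htop (Subgroup.upperCentralSeries K 1) ⁅s1,s2⁆ hmem2
      rw [Subgroup.mem_upperCentralSeries_succ_iff]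
      intro y
      exact this y
    have := comm_mem_of_gen htop (Subgroup.upperCentralSeries K 2) s1 hmem3
    rw [SetLike.mem_coe, Subgroup.mem_upperCentralSeries_succ_iff]
    intro y
    exact this y
  haveI : Group.IsNilpotent K := ⟨⟨3, hucs⟩⟩
  exact Subgroup.lowerCentralSeries_eq_bot_iff_nilpotencyClass_le.mpr
    (Subgroup.upperCentralSeries_eq_top_iff_nilpotencyClass_le.mp hucs)

end Crit

section Engel
variable {G : Type*} [Group G]

lemma engel_pow4 (x : G) (hx2 : x*x = 1) (hE : IsLeftThreeEngel x) (k : G) :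
    (k⁻¹*x*k*x)^4 = 1 := by
  have hxinv : x⁻¹ = x := inv_of_invol hx2
  set w := k⁻¹*x*k*x with hwdef
  have h1 : paperComm k x = w := by
    simp only [paperComm, hxinv]
    exact hwdef.symm
  have hconj : x*w*x = w⁻¹ := by
    rw [hwdef]
    simp only [mul_inv_rev, hxinv, inv_inv]
    simp only [mul_assoc, cancel_left hx2, hx2, mul_one]
  have hconj2 : x*w⁻¹*x = w := by
    have := congrArg (fun t => t⁻¹) hconj
    simp only [mul_inv_rev, hxinv, inv_inv] at this
    simpa only [mul_assoc] using this
  have h2 : paperComm w x = w⁻¹*w⁻¹ := by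
    simp only [paperComm, hxinv]
    calc w⁻¹*x*w*x = w⁻¹*(x*w*x) := by group
    _ = w⁻¹*w⁻¹ := by rw [hconj]
  have h3 : paperComm (w⁻¹*w⁻¹) x = w^4 := by
    have hmid : (x*w⁻¹*x)*(x*w⁻¹*x) = x*(w⁻¹*w⁻¹)*x := by
      simp only [mul_assoc, cancel_left hx2]
    have hmid2 : x*(w⁻¹*w⁻¹)*x = w*w := by rw [← hmid, hconj2]
    simp only [paperComm, hxinv, mul_inv_rev, inv_inv]
    calc w*w*x*(w⁻¹*w⁻¹)*x = (w*w)*(x*(w⁻¹*w⁻¹)*x) := by group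
    _ = (w*w)*(w*w) := by rw [hmid2]
    _ = w^4 := by rw [pow_succ, pow_succ, pow_succ, pow_one]; group
  have hfin := hE k
  rw [h1, h2, h3] at hfin
  exact hfin

lemma conj_engel (x : G) (hx2 : x*x = 1) (hE : IsLeftThreeEngel x) (f h : G) :
    (h⁻¹*(f⁻¹*x*f)*h*(f⁻¹*x*f))^4 = 1 := by
  have base := engel_pow4 x hx2 hE (f*h*f⁻¹)
  have e : h⁻¹*(f⁻¹*x*f)*h*(f⁻¹*x*f) = f⁻¹ * ((f*h*f⁻¹)⁻¹*x*(f*h*f⁻¹)*x) * f := by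
    group
  rw [e]
  have e2 : (f⁻¹ * ((f*h*f⁻¹)⁻¹*x*(f*h*f⁻¹)*x) * f)^4
      = f⁻¹ * ((f*h*f⁻¹)⁻¹*x*(f*h*f⁻¹)*x)^4 * f := by
    simp only [pow_succ, pow_zero, one_mul]
    group
  rw [e2, base]
  group

lemma F_law (x : G) (hx2 : x*x = 1) (hE : IsLeftThreeEngel x)
    (h8' : ∀ w : G, w^8 = 1 → w^4 = 1) (f m : G) (hm : m*m = 1) :
    (m*(f⁻¹*x*f))^4 = 1 := by
  apply h8'
  have base := conj_engel x hx2 hE f m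
  have e : (m*(f⁻¹*x*f))^8 = (m⁻¹*(f⁻¹*x*f)*m*(f⁻¹*x*f))^4 := by
    rw [inv_of_invol hm]
    simp only [pow_succ, pow_zero, one_mul]
    group
  rw [e]
  exact base

lemma conj_invol (x : G) (hx2 : x*x = 1) (f : G) : (f⁻¹*x*f)*(f⁻¹*x*f) = 1 := by
  have e : (f⁻¹*x*f)*(f⁻¹*x*f) = f⁻¹*(x*x)*f := by group
  rw [e, hx2]
  group

lemma ord8_law (h8 : ∀ w : G, orderOf w ≠ 8) : ∀ w : G, w^8 = 1 → w^4 = 1 := by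
  intro w hw
  have hdvd : orderOf w ∣ 2^3 := by
    simpa using orderOf_dvd_of_pow_eq_one hw
  have : orderOf w ∣ 4 := by
    rcases (Nat.dvd_prime_pow Nat.prime_two).mp hdvd with ⟨k, hk, he⟩
    interval_cases k
    · rw [he]; norm_num
    · rw [he]; norm_num
    · rw [he]; norm_num
    · exfalso; exact h8 w (by rw [he]; norm_num)
  exact orderOf_dvd_iff_pow_eq_one.mp this

end Engel

theorem stmt14 {G : Type*} [Group G] (x g : G)
    (h8 : ∀ w : G, orderOf w ≠ 8)
    (hEngel : IsLeftThreeEngel x)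
    (hx : orderOf x = 2) (hg : orderOf g = 4)
    (u v t : G)
    (hu : u ∈ ({x, g⁻¹ * x * g, (g ^ 2)⁻¹ * x * g ^ 2, (g ^ 3)⁻¹ * x * g ^ 3} : Set G))
    (hv : v ∈ ({x, g⁻¹ * x * g, (g ^ 2)⁻¹ * x * g ^ 2, (g ^ 3)⁻¹ * x * g ^ 3} : Set G))
    (ht : t ∈ ({x, g⁻¹ * x * g, (g ^ 2)⁻¹ * x * g ^ 2, (g ^ 3)⁻¹ * x * g ^ 3} : Set G))
    (huv : u ≠ v) (hut : u ≠ t) (hvt : v ≠ t)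
    (hcomm : Commute u v) :
    Subgroup.lowerCentralSeries (⊤ : Subgroup ↥(Subgroup.closure ({u, v, t} : Set G))) 3 = ⊥ := by
  have hx2 : x*x = 1 := by
    have h := pow_orderOf_eq_one x
    rw [hx, pow_two] at h
    exact h
  have h8' : ∀ w : G, w^8 = 1 → w^4 = 1 := ord8_law h8
  have hconj : ∀ s ∈ ({x, g⁻¹ * x * g, (g ^ 2)⁻¹ * x * g ^ 2, (g ^ 3)⁻¹ * x * g ^ 3} : Set G),
      ∃ f : G, s = f⁻¹*x*f := by
    intro s hs
    simp only [Set.mem_insert_iff, Set.mem_singleton_iff] at hs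
    rcases hs with rfl|rfl|rfl|rfl
    exacts [⟨1, by group⟩, ⟨g, rfl⟩, ⟨g^2, rfl⟩, ⟨g^3, rfl⟩]
  obtain ⟨fu, hfu⟩ := hconj u hu
  obtain ⟨fv, hfv⟩ := hconj v hv
  obtain ⟨ft, hft⟩ := hconj t ht
  have hu2 : u*u = 1 := by rw [hfu]; exact conj_invol x hx2 fu
  have hv2 : v*v = 1 := by rw [hfv]; exact conj_invol x hx2 fv
  have ht2 : t*t = 1 := by rw [hft]; exact conj_invol x hx2 ft
  have hF : ∀ m : G, m*m = 1 → (m*u)^4 = 1 ∧ (m*t)^4 = 1 ∧ (m*v)^4 = 1 := by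
    intro m hm
    refine ⟨?_, ?_, ?_⟩
    · rw [hfu]; exact F_law x hx2 hEngel h8' fu m hm
    · rw [hft]; exact F_law x hx2 hEngel h8' ft m hm
    · rw [hfv]; exact F_law x hx2 hEngel h8' fv m hm
  have hquad := quads u t v hu2 ht2 hv2 hcomm.eq hF h8'
  have hseteq : ({u,v,t} : Set G) = ({u,t,v} : Set G) := by
    ext s
    simp only [Set.mem_insert_iff, Set.mem_singleton_iff]
    tauto
  refine crit u v t ?_
  intro s1 hs1 s2 hs2 s3 hs3 s4 hs4
  rw [hseteq] at hs1 hs2 hs3 hs4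
  exact hquad _ hs1 _ hs2 _ hs3 _ hs4
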